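/- Let f ∈ F^coord_{0,(L₁,L₂)}(ℝ^d) with two blocks, let K ≥ 1 and let (x_i)_{i=0,…,2K} be the iterates of K cycles of 2-block cyclic coordinate descent with step sizes 1/L_ℓ: for k = 0,…,K−1, x_{2k+1} = x_{2k} − (1/L₁) U₁ ∇^{(1)} f(x_{2k}) and x_{2k+2} = x_{2k+1} − (1/L₂) U₂ ∇^{(2)} f(x_{2k+1}). Then min_{i ∈ {1,…,2K−1}} ‖∇f(x_i)‖_L*² ≤ (2/(2K−1)) ( f(x₀) − f(x_{2K}) ). -/

import Mathlib

open RealInnerProductSpace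

noncomputable section

/-- The `ℓ`-th block `ℝ^{d_ℓ}` of the decomposition `ℝ^d = ℝ^{d_1} × … × ℝ^{d_p}`. -/
abbrev Blk {p : ℕ} (d : Fin p → ℕ) (ℓ : Fin p) : Type := EuclideanSpace ℝ (Fin (d ℓ))

/-- The space `ℝ^d = ℝ^{d_1} × … × ℝ^{d_p}` with the Euclidean (ℓ²) norm. -/
abbrev Sp {p : ℕ} (d : Fin p → ℕ) : Type := PiLp 2 (Blk d)

/-- The selection embedding `U_ℓ : ℝ^{d_ℓ} → ℝ^d` placing `h` in block `ℓ` and `0` elsewhere. -/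
def inj {p : ℕ} (d : Fin p → ℕ) (ℓ : Fin p) (h : Blk d ℓ) : Sp d :=
  (WithLp.equiv 2 (∀ ℓ, Blk d ℓ)).symm (Pi.single ℓ h)

/-- Membership in the class `F^coord_{0,L}(ℝ^d)`: convex, differentiable, and for each block
`ℓ` the partial gradient `∇^{(ℓ)} f` is `L_ℓ`-Lipschitz along the block `ℓ`. -/
def IsCoordSmooth {p : ℕ} (d : Fin p → ℕ) (L : Fin p → ℝ) (f : Sp d → ℝ) : Prop :=
  ConvexOn ℝ Set.univ f ∧ Differentiable ℝ f ∧
    ∀ (ℓ : Fin p) (x : Sp d) (h : Blk d ℓ),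
      ‖gradient f (x + inj d ℓ h) ℓ - gradient f x ℓ‖ ≤ L ℓ * ‖h‖

section Abstract

open Set

variable {E : Type*} [NormedAddCommGroup E] [InnerProductSpace ℝ E] [CompleteSpace E]

/-- Derivative of `f` along a line, in terms of an explicit gradient. -/
lemma line_hasDerivAt {f : E → ℝ} {g : E → E} (hg : ∀ u, HasGradientAt f (g u) u)
    (a v : E) (t : ℝ) :
    HasDerivAt (fun s : ℝ => f (a + s • v)) ⟪g (a + t • v), v⟫ t := by
  have h1 : HasDerivAt (fun s : ℝ => a + s • v) v t := by
    simpa using ((hasDerivAt_id t).smul_const v).const_add a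
  have h2 := (hg (a + t • v)).hasFDerivAt
  have := h2.comp_hasDerivAt t h1
  exact this

/-- Descent lemma: quadratic upper bound from Lipschitz gradient. -/
lemma descent_lemma {f : E → ℝ} {g : E → E} (hg : ∀ u, HasGradientAt f (g u) u)
    {Lc : ℝ} (hLc : 0 < Lc) (hlip : ∀ u v, ‖g u - g v‖ ≤ Lc * ‖u - v‖) (x y : E) :
    f y ≤ f x + ⟪g x, y - x⟫ + Lc / 2 * ‖y - x‖ ^ 2 := by
  set v := y - x with hv
  set χ : ℝ → ℝ := fun t => f x + t * ⟪g x, v⟫ + Lc / 2 * t ^ 2 * ‖v‖ ^ 2 - f (x + t • v) with hχ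
  have hx0 : χ 0 = 0 := by simp [hχ]
  have hder : ∀ t : ℝ, HasDerivAt χ
      (⟪g x, v⟫ + Lc / 2 * (2 * t) * ‖v‖ ^ 2 - ⟪g (x + t • v), v⟫) t := by
    intro t
    have h1 : HasDerivAt (fun t : ℝ => f x + t * ⟪g x, v⟫ + Lc / 2 * t ^ 2 * ‖v‖ ^ 2)
        (⟪g x, v⟫ + Lc / 2 * (2 * t) * ‖v‖ ^ 2) t := by
      have : HasDerivAt (fun t : ℝ => t ^ 2) (2 * t) t := by
        simpa using (hasDerivAt_pow 2 t)
      have := ((hasDerivAt_id t).mul_const ⟪g x, v⟫).const_add (f x) |>.add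
        ((this.const_mul (Lc / 2)).mul_const (‖v‖ ^ 2))
      exact this.congr_deriv (by ring)
    exact h1.sub (line_hasDerivAt hg x v t)
  have hmono : MonotoneOn χ (Icc (0:ℝ) 1) := by
    apply monotoneOn_of_deriv_nonneg (convex_Icc 0 1)
    · exact fun t _ => (hder t).continuousAt.continuousWithinAt
    · exact fun t _ => ((hder t).differentiableAt).differentiableWithinAt
    · intro t ht
      rw [interior_Icc] at ht
      rw [(hder t).deriv]
      have h1 : ⟪g (x + t • v), v⟫ - ⟪g x, v⟫ ≤ Lc * t * ‖v‖ ^ 2 := by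
        rw [← inner_sub_left]
        calc ⟪g (x + t • v) - g x, v⟫ ≤ ‖g (x + t • v) - g x‖ * ‖v‖ :=
              real_inner_le_norm _ _
          _ ≤ Lc * ‖x + t • v - x‖ * ‖v‖ := by
              have := hlip (x + t • v) x
              nlinarith [norm_nonneg v]
          _ = Lc * t * ‖v‖ ^ 2 := by
              rw [show x + t • v - x = t • v by abel, norm_smul]
              simp [abs_of_pos ht.1]
              ring
      nlinarith
  have := hmono (left_mem_Icc.mpr zero_le_one) (right_mem_Icc.mpr zero_le_one) zero_le_one
  rw [hx0] at this
  have h2 : x + (1:ℝ) • v = y := by rw [one_smul, hv]; abel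
  simp only [hχ, h2, one_mul, one_pow] at this
  linarith

/-- Gradient inequality for convex functions. -/
lemma convex_lower {f : E → ℝ} {g : E → E} (hg : ∀ u, HasGradientAt f (g u) u)
    (hconv : ConvexOn ℝ univ f) (x y : E) :
    f x + ⟪g x, y - x⟫ ≤ f y := by
  set v := y - x with hv
  set φ : ℝ → ℝ := fun t => f (x + t • v) with hφ
  have hconvφ : ConvexOn ℝ univ φ := by
    constructor
    · exact convex_univ
    · intro s _ t _ a b ha hb hab
      have key : x + (a * s + b * t) • v = a • (x + s • v) + b • (x + t • v) := by
        have : a • (x + s • v) + b • (x + t • v) = (a + b) • x + (a * s + b * t) • v := by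
          module
        rw [this, hab, one_smul]
      simp only [hφ, smul_eq_mul, key]
      exact hconv.2 (mem_univ _) (mem_univ _) ha hb hab
  have hder := line_hasDerivAt hg x v 0
  simp only [zero_smul, add_zero] at hder
  have := hconvφ.le_slope_of_hasDerivAt (mem_univ (0:ℝ)) (mem_univ (1:ℝ)) one_pos hder
  rw [slope_def_field] at this
  have h1 : φ 1 = f y := by simp [hφ, hv]
  have h0 : φ 0 = f x := by simp [hφ]
  rw [h1, h0] at this
  simp at this
  linarith

/-- Interpolation inequality for convex functions with Lipschitz gradient. -/
lemma interp_ineq {f : E → ℝ} {g : E → E} (hg : ∀ u, HasGradientAt f (g u) u)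
    (hconv : ConvexOn ℝ univ f) {Lc : ℝ} (hLc : 0 < Lc)
    (hlip : ∀ u v, ‖g u - g v‖ ≤ Lc * ‖u - v‖) (x y : E) :
    f x + ⟪g x, y - x⟫ + 1 / (2 * Lc) * ‖g y - g x‖ ^ 2 ≤ f y := by
  set w := g y - g x with hw
  set z := y - Lc⁻¹ • w with hz
  have hA := descent_lemma hg hLc hlip y z
  have hB := convex_lower hg hconv x z
  have e1 : z - y = -(Lc⁻¹ • w) := by rw [hz]; abel
  have e2 : ⟪g y, z - y⟫ = -(Lc⁻¹ * ⟪g y, w⟫) := by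
    rw [e1, inner_neg_right, real_inner_smul_right]
  have e3 : ‖z - y‖ ^ 2 = Lc⁻¹ ^ 2 * ‖w‖ ^ 2 := by
    rw [e1, norm_neg, norm_smul]
    rw [Real.norm_eq_abs, abs_of_pos (inv_pos.mpr hLc)]
    ring
  have e4 : ⟪g x, z - x⟫ = ⟪g x, y - x⟫ - Lc⁻¹ * ⟪g x, w⟫ := by
    have : z - x = (y - x) - Lc⁻¹ • w := by rw [hz]; abel
    rw [this, inner_sub_right, real_inner_smul_right]
  have e5 : ⟪g y, w⟫ - ⟪g x, w⟫ = ‖w‖ ^ 2 := by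
    rw [← inner_sub_left, ← hw, real_inner_self_eq_norm_sq]
  rw [e2, e3] at hA
  rw [e4] at hB
  have hLc' : Lc⁻¹ > 0 := inv_pos.mpr hLc
  have e7 : Lc / 2 * (Lc⁻¹ ^ 2 * ‖w‖ ^ 2) = 1 / (2 * Lc) * ‖w‖ ^ 2 := by
    field_simp
  have e6 : Lc⁻¹ * ⟪g y, w⟫ - Lc⁻¹ * ⟪g x, w⟫ = Lc⁻¹ * ‖w‖ ^ 2 := by
    rw [← mul_sub, e5]
  have e8 : Lc⁻¹ * ‖w‖ ^ 2 = 2 * (1 / (2 * Lc) * ‖w‖ ^ 2) := by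
    field_simp
  linarith

/-- Key step inequality for an exact gradient step. -/
lemma key_step {f : E → ℝ} {g : E → E} (hg : ∀ u, HasGradientAt f (g u) u)
    (hconv : ConvexOn ℝ univ f) {Lc : ℝ} (hLc : 0 < Lc)
    (hlip : ∀ u v, ‖g u - g v‖ ≤ Lc * ‖u - v‖) (x y : E) (hy : y = x - Lc⁻¹ • g x) :
    1 / (2 * Lc) * (‖g x‖ ^ 2 + ‖g y‖ ^ 2) ≤ f x - f y := by
  have h := interp_ineq hg hconv hLc hlip y x
  have e1 : x - y = Lc⁻¹ • g x := by rw [hy]; abel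
  have e2 : ⟪g y, x - y⟫ = Lc⁻¹ * ⟪g y, g x⟫ := by rw [e1, real_inner_smul_right]
  have e3 : ‖g x - g y‖ ^ 2 = ‖g x‖ ^ 2 - 2 * ⟪g x, g y⟫ + ‖g y‖ ^ 2 := by
    rw [← real_inner_self_eq_norm_sq, inner_sub_sub_self]
    rw [← real_inner_self_eq_norm_sq, ← real_inner_self_eq_norm_sq, real_inner_comm (g y) (g x)]
    ring
  have e4 : Lc⁻¹ * ⟪g y, g x⟫ = 2 * (1 / (2 * Lc) * ⟪g x, g y⟫) := by
    rw [real_inner_comm]; field_simp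
  have e5 : 1 / (2 * Lc) * (‖g x‖ ^ 2 - 2 * ⟪g x, g y⟫ + ‖g y‖ ^ 2)
      = 1 / (2 * Lc) * (‖g x‖ ^ 2 + ‖g y‖ ^ 2) - 2 * (1 / (2 * Lc) * ⟪g x, g y⟫) := by
    ring
  rw [e2, e3] at h
  linarith

end Abstract

section Blocks

open Set

variable {p : ℕ} {d : Fin p → ℕ}

lemma inj_add (ℓ : Fin p) (u v : Blk d ℓ) : inj d ℓ (u + v) = inj d ℓ u + inj d ℓ v := by
  simp [inj, Pi.single_add]

lemma inj_smul (ℓ : Fin p) (c : ℝ) (u : Blk d ℓ) : inj d ℓ (c • u) = c • inj d ℓ u := by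
  simp [inj, Pi.single_smul]

lemma inj_zero (ℓ : Fin p) : inj d ℓ (0 : Blk d ℓ) = 0 := by
  simp [inj]

lemma inj_neg (ℓ : Fin p) (u : Blk d ℓ) : inj d ℓ (-u) = -inj d ℓ u := by
  have := inj_smul ℓ (-1 : ℝ) u
  simpa using this

lemma inner_inj (ℓ : Fin p) (u : Blk d ℓ) (w : Sp d) : ⟪inj d ℓ u, w⟫ = ⟪u, w ℓ⟫ := by
  rw [PiLp.inner_apply]
  rw [Finset.sum_eq_single ℓ]
  · congr 1
    simp [inj]
  · intro j _ hj
    have : inj d ℓ u j = 0 := by simp [inj, Pi.single_eq_of_ne hj]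
    rw [this, inner_zero_left]
  · intro h; exact absurd (Finset.mem_univ ℓ) h

/-- The injection as a continuous linear map. -/
def injCLM (d : Fin p → ℕ) (ℓ : Fin p) : Blk d ℓ →L[ℝ] Sp d :=
  LinearMap.toContinuousLinearMap
    { toFun := inj d ℓ
      map_add' := inj_add ℓ
      map_smul' := inj_smul ℓ }

@[simp] lemma injCLM_apply (ℓ : Fin p) (u : Blk d ℓ) : injCLM d ℓ u = inj d ℓ u := rfl

lemma hasGradientAt_restrict {f : Sp d → ℝ} (hdiff : Differentiable ℝ f)
    (z : Sp d) (ℓ : Fin p) (u : Blk d ℓ) :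
    HasGradientAt (fun v => f (z + inj d ℓ v)) (gradient f (z + inj d ℓ u) ℓ) u := by
  have hp := (hdiff (z + inj d ℓ u)).hasGradientAt
  have hF := hp.hasFDerivAt
  have hlin : HasFDerivAt (fun v : Blk d ℓ => z + inj d ℓ v) (injCLM d ℓ) u := by
    simpa using ((injCLM d ℓ).hasFDerivAt (x := u)).const_add z
  have hcomp := hF.comp u hlin
  rw [hasGradientAt_iff_hasFDerivAt]
  refine hcomp.congr_fderiv ?_
  ext v
  simp only [ContinuousLinearMap.coe_comp', Function.comp_apply, injCLM_apply,
    InnerProductSpace.toDual_apply_apply]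
  rw [real_inner_comm, inner_inj ℓ v, real_inner_comm]

lemma convexOn_restrict {f : Sp d → ℝ} (hconv : ConvexOn ℝ univ f)
    (z : Sp d) (ℓ : Fin p) : ConvexOn ℝ univ (fun v : Blk d ℓ => f (z + inj d ℓ v)) := by
  refine ⟨convex_univ, ?_⟩
  intro s _ t _ a b ha hb hab
  have key : z + inj d ℓ (a • s + b • t) = a • (z + inj d ℓ s) + b • (z + inj d ℓ t) := by
    rw [inj_add, inj_smul, inj_smul]
    have : a • (z + inj d ℓ s) + b • (z + inj d ℓ t)
        = (a + b) • z + (a • inj d ℓ s + b • inj d ℓ t) := by module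
    rw [this, hab, one_smul]
  simp only [key]
  exact hconv.2 (mem_univ _) (mem_univ _) ha hb hab

lemma lip_restrict {L : Fin p → ℝ} {f : Sp d → ℝ} (hf : IsCoordSmooth d L f)
    (z : Sp d) (ℓ : Fin p) (u v : Blk d ℓ) :
    ‖gradient f (z + inj d ℓ u) ℓ - gradient f (z + inj d ℓ v) ℓ‖ ≤ L ℓ * ‖u - v‖ := by
  have := hf.2.2 ℓ (z + inj d ℓ v) (u - v)
  have e : z + inj d ℓ v + inj d ℓ (u - v) = z + inj d ℓ u := by
    rw [sub_eq_add_neg, inj_add, inj_neg]; abel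
  rwa [e] at this

/-- One exact coordinate gradient step and the two-sided gradient estimate. -/
lemma block_step {L : Fin p → ℝ} (hL : ∀ ℓ, 0 < L ℓ) {f : Sp d → ℝ}
    (hf : IsCoordSmooth d L f) (ℓ : Fin p) (z y : Sp d)
    (hy : y = z - (L ℓ)⁻¹ • inj d ℓ (gradient f z ℓ)) :
    1 / (2 * L ℓ) * (‖gradient f z ℓ‖ ^ 2 + ‖gradient f y ℓ‖ ^ 2) ≤ f z - f y := by
  set F : Blk d ℓ → ℝ := fun v => f (z + inj d ℓ v) with hF
  set g : Blk d ℓ → Blk d ℓ := fun v => gradient f (z + inj d ℓ v) ℓ with hg'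
  have hg : ∀ v, HasGradientAt F (g v) v := hasGradientAt_restrict hf.2.1 z ℓ
  have hconv := convexOn_restrict hf.1 z ℓ
  have hlip : ∀ u v, ‖g u - g v‖ ≤ L ℓ * ‖u - v‖ := lip_restrict hf z ℓ
  have hz0 : z + inj d ℓ (0 : Blk d ℓ) = z := by rw [inj_zero]; abel
  have hg0 : g 0 = gradient f z ℓ := by
    show gradient f (z + inj d ℓ (0 : Blk d ℓ)) ℓ = gradient f z ℓ
    rw [hz0]
  set y0 : Blk d ℓ := (0 : Blk d ℓ) - (L ℓ)⁻¹ • gradient f z ℓ with hy0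
  have hkey := key_step hg hconv (hL ℓ) hlip 0 y0 (by rw [hy0, hg0])
  have hzy : z + inj d ℓ y0 = y := by
    rw [hy0, hy, zero_sub, inj_neg, inj_smul]
    abel
  have hF0 : F 0 = f z := by
    show f (z + inj d ℓ (0 : Blk d ℓ)) = f z
    rw [hz0]
  have hFy : F y0 = f y := by
    show f (z + inj d ℓ y0) = f y
    rw [hzy]
  have hgy : g y0 = gradient f y ℓ := by
    show gradient f (z + inj d ℓ y0) ℓ = gradient f y ℓ
    rw [hzy]
  rw [hg0, hgy, hF0, hFy] at hkey
  exact hkey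

end Blocks

theorem min_residual_gradient_two_block_ccd {d : Fin 2 → ℕ} (L : Fin 2 → ℝ)
    (hL : ∀ ℓ, 0 < L ℓ) (f : Sp d → ℝ) (hf : IsCoordSmooth d L f)
    (K : ℕ) (hK : 1 ≤ K) (x : ℕ → Sp d)
    (h1 : ∀ k < K, x (2 * k + 1) = x (2 * k) - (L 0)⁻¹ • inj d 0 (gradient f (x (2 * k)) 0))
    (h2 : ∀ k < K, x (2 * k + 2) = x (2 * k + 1) - (L 1)⁻¹ • inj d 1 (gradient f (x (2 * k + 1)) 1)) :
    (Finset.Icc 1 (2 * K - 1)).inf' (Finset.nonempty_Icc.mpr (by omega))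
        (fun i => ∑ ℓ, (L ℓ)⁻¹ * ‖gradient f (x i) ℓ‖ ^ 2)
      ≤ 2 / (2 * (K : ℝ) - 1) * (f (x 0) - f (x (2 * K))) := by
  set N : ℕ → ℝ := fun i => ∑ ℓ, (L ℓ)⁻¹ * ‖gradient f (x i) ℓ‖ ^ 2 with hN
  have hNval : ∀ i, N i = (L 0)⁻¹ * ‖gradient f (x i) 0‖ ^ 2
      + (L 1)⁻¹ * ‖gradient f (x i) 1‖ ^ 2 := by
    intro i; rw [hN]; exact Fin.sum_univ_two _
  have hinv : ∀ ℓ : Fin 2, ∀ a : ℝ, (L ℓ)⁻¹ * a = 2 * (1 / (2 * L ℓ) * a) := by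
    intro ℓ a
    have := (hL ℓ).ne'
    field_simp
  have stepA : ∀ k < K, (L 0)⁻¹ * ‖gradient f (x (2 * k)) 0‖ ^ 2
      + (L 0)⁻¹ * ‖gradient f (x (2 * k + 1)) 0‖ ^ 2
      ≤ 2 * (f (x (2 * k)) - f (x (2 * k + 1))) := by
    intro k hk
    have h := block_step hL hf 0 _ _ (h1 k hk)
    rw [mul_add] at h
    rw [hinv 0, hinv 0]
    linarith
  have stepB : ∀ k < K, (L 1)⁻¹ * ‖gradient f (x (2 * k + 1)) 1‖ ^ 2
      + (L 1)⁻¹ * ‖gradient f (x (2 * k + 2)) 1‖ ^ 2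
      ≤ 2 * (f (x (2 * k + 1)) - f (x (2 * k + 2))) := by
    intro k hk
    have h := block_step hL hf 1 _ _ (h2 k hk)
    rw [mul_add] at h
    rw [hinv 1, hinv 1]
    linarith
  have claim : ∀ n, 1 ≤ n → n ≤ K →
      (∑ i ∈ Finset.Icc 1 (2 * n - 1), N i) + (L 0)⁻¹ * ‖gradient f (x 0) 0‖ ^ 2
        + (L 1)⁻¹ * ‖gradient f (x (2 * n)) 1‖ ^ 2 ≤ 2 * (f (x 0) - f (x (2 * n))) := by
    intro n hn
    induction n, hn using Nat.le_induction with
    | base =>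
      intro _
      have hA := stepA 0 hK
      have hB := stepB 0 hK
      norm_num at hA hB ⊢
      rw [hNval 1]
      linarith
    | succ n hn ih =>
      intro hnK
      have hnK' : n ≤ K := by omega
      have hnltK : n < K := by omega
      have ihh := ih hnK'
      have hA := stepA n hnltK
      have hB := stepB n hnltK
      have hsplit : ∑ i ∈ Finset.Icc 1 (2 * (n + 1) - 1), N i
          = (∑ i ∈ Finset.Icc 1 (2 * n - 1), N i) + N (2 * n) + N (2 * n + 1) := by
        have eA : ∑ i ∈ Finset.Icc 1 (2 * n + 1), N i
            = (∑ i ∈ Finset.Icc 1 (2 * n), N i) + N (2 * n + 1) :=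
          Finset.sum_Icc_succ_top (by omega) N
        have eB : ∑ i ∈ Finset.Icc 1 (2 * n), N i
            = (∑ i ∈ Finset.Icc 1 (2 * n - 1), N i) + N (2 * n) := by
          have e : 2 * n = (2 * n - 1) + 1 := by omega
          conv_lhs => rw [e, Finset.sum_Icc_succ_top (by omega) N]
          rw [← e]
        rw [show 2 * (n + 1) - 1 = 2 * n + 1 from by omega, eA, eB]
      rw [hsplit, show 2 * (n + 1) = 2 * n + 2 from by omega]
      rw [hNval (2 * n), hNval (2 * n + 1)]
      linarith
  have hfinal := claim K hK le_rfl
  have hdrop : ∑ i ∈ Finset.Icc 1 (2 * K - 1), N i ≤ 2 * (f (x 0) - f (x (2 * K))) := by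
    have h1' : 0 ≤ (L 0)⁻¹ * ‖gradient f (x 0) 0‖ ^ 2 :=
      mul_nonneg (inv_nonneg.mpr (hL 0).le) (by positivity)
    have h2' : 0 ≤ (L 1)⁻¹ * ‖gradient f (x (2 * K)) 1‖ ^ 2 :=
      mul_nonneg (inv_nonneg.mpr (hL 1).le) (by positivity)
    linarith
  set m := (Finset.Icc 1 (2 * K - 1)).inf' (Finset.nonempty_Icc.mpr (by omega)) N with hm
  have hcard : (Finset.Icc 1 (2 * K - 1)).card = 2 * K - 1 := by
    rw [Nat.card_Icc]
    omega
  have hmle : ∀ i ∈ Finset.Icc 1 (2 * K - 1), m ≤ N i := by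
    intro i hi
    rw [hm]
    exact Finset.inf'_le N hi
  have hsumlb : (2 * K - 1 : ℕ) • m ≤ ∑ i ∈ Finset.Icc 1 (2 * K - 1), N i := by
    have h := Finset.card_nsmul_le_sum (Finset.Icc 1 (2 * K - 1)) N m hmle
    rwa [hcard] at h
  have hcast : ((2 * K - 1 : ℕ) : ℝ) = 2 * (K : ℝ) - 1 := by
    have : (1 : ℕ) ≤ 2 * K := by omega
    push_cast [Nat.cast_sub this]
    ring
  have hpos : (0 : ℝ) < 2 * (K : ℝ) - 1 := by
    have : (1 : ℝ) ≤ (K : ℝ) := by exact_mod_cast hK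
    linarith
  have hmul : (2 * (K : ℝ) - 1) * m ≤ 2 * (f (x 0) - f (x (2 * K))) := by
    calc (2 * (K : ℝ) - 1) * m = ((2 * K - 1 : ℕ) : ℝ) * m := by rw [hcast]
      _ = (2 * K - 1 : ℕ) • m := by rw [nsmul_eq_mul]
      _ ≤ ∑ i ∈ Finset.Icc 1 (2 * K - 1), N i := hsumlb
      _ ≤ 2 * (f (x 0) - f (x (2 * K))) := hdrop
  rw [div_mul_eq_mul_div, le_div_iff₀ hpos]
  linarith
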